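/- Assume the abstract linear-stability data (see context), and in addition let M₂, C₁ > 0, let S : ℝ → ℝ → ℒ(𝒳) satisfy S(t,0) = S₀(t) and ‖S(t,s)‖ ≤ M₂ for all 0 ≤ s ≤ t, and let N : ℝ → 𝒳 → 𝒳 satisfy ‖N(s,w)‖ ≤ C₁·‖w‖² whenever ‖w‖ ≤ 1. Then for every T > 0 and δ > 0 there exists ε > 0 such that: for every v₀ ∈ 𝒳 with ‖v₀‖ ≤ ε and every continuous v : [0,T] → 𝒳 with s ↦ N(s, v(s)) continuous, satisfying v(t) = S(t,0)(v₀) + ∫₀ᵗ S(t,s)(N(s, v(s))) ds (Bochner integral) for all t ∈ [0,T], the function u(t) := Φ(t)(u*) + v(t) satisfies ‖u(t) − Φ(t)( Ψ( exp(t·L)(𝒫 v₀) )(u*) )‖ ≤ (M₃·e^{−a·t} + δ)·‖v₀‖ for all t ∈ [0,T]. -/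

import Mathlib

set_option maxHeartbeats 1600000


open MeasureTheory intervalIntegral

/-- **Deterministic orbital stability with the predicted phase** (Theorem 4.3).
Under the abstract linear-stability data and the quadratic remainder bound on `N`, for all
`T, δ > 0` there is `ε > 0` such that any continuous mild solution
`v(t) = S(t,0)v₀ + ∫₀ᵗ S(t,s) N(s,v(s)) ds` with `‖v₀‖ ≤ ε` gives rise to a solution
`u(t) = Φ(t)u* + v(t)` satisfying
`‖u(t) − Φ(t)(Ψ(exp(tL)𝒫v₀)u*)‖ ≤ (M₃ e^{−at} + δ)‖v₀‖` on `[0,T]`. -/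
theorem deterministic_orbital_stability
    {𝒳 : Type*} [NormedAddCommGroup 𝒳] [NormedSpace ℝ 𝒳] [CompleteSpace 𝒳]
    {g : Type*} [NormedAddCommGroup g] [NormedSpace ℝ g] [FiniteDimensional ℝ g]
    (ustar : 𝒳) (C M₁ M₃ a : ℝ) (hC : 0 < C) (hM₁ : 0 < M₁) (hM₃ : 0 < M₃) (ha : 0 < a)
    (p : g →L[ℝ] 𝒳) (P : 𝒳 →L[ℝ] g) (L : g →L[ℝ] g)
    (Φ : ℝ → 𝒳 →L[ℝ] 𝒳) (S₀ : ℝ → 𝒳 →L[ℝ] 𝒳) (Ψ : g → 𝒳 →L[ℝ] 𝒳) (Ps : 𝒳 →L[ℝ] 𝒳)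
    (hΦBdd : ∀ t : ℝ, 0 ≤ t → ‖Φ t‖ ≤ M₁)
    (hΨTaylor : ∀ Z : g, ‖Ψ Z ustar - ustar - p Z‖ ≤ C * ‖Z‖ ^ 2)
    (hS₀decomp : ∀ t : ℝ, 0 ≤ t → ∀ φ : 𝒳,
      S₀ t φ = Φ t (p (NormedSpace.exp (t • L) (P φ))) + S₀ t (Ps φ))
    (hStable : ∀ t : ℝ, 0 ≤ t → ‖(S₀ t).comp Ps‖ ≤ M₃ * Real.exp (-a * t))
    (M₂ C₁ : ℝ) (hM₂ : 0 < M₂) (hC₁ : 0 < C₁)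
    (S : ℝ → ℝ → 𝒳 →L[ℝ] 𝒳)
    (hS0 : ∀ t : ℝ, S t 0 = S₀ t)
    (hSBdd : ∀ s t : ℝ, 0 ≤ s → s ≤ t → ‖S t s‖ ≤ M₂)
    (N : ℝ → 𝒳 → 𝒳)
    (hN : ∀ (s : ℝ) (w : 𝒳), ‖w‖ ≤ 1 → ‖N s w‖ ≤ C₁ * ‖w‖ ^ 2) :
    ∀ T > (0 : ℝ), ∀ δ > (0 : ℝ), ∃ ε > (0 : ℝ),
      ∀ v₀ : 𝒳, ‖v₀‖ ≤ ε →
        ∀ v : ℝ → 𝒳, ContinuousOn v (Set.Icc 0 T) →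
          ContinuousOn (fun s => N s (v s)) (Set.Icc 0 T) →
          (∀ t ∈ Set.Icc (0 : ℝ) T,
            v t = S t 0 v₀ + ∫ s in (0 : ℝ)..t, S t s (N s (v s))) →
          ∀ t ∈ Set.Icc (0 : ℝ) T,
            ‖(Φ t ustar + v t) - Φ t (Ψ (NormedSpace.exp (t • L) (P v₀)) ustar)‖ ≤
              (M₃ * Real.exp (-a * t) + δ) * ‖v₀‖ := by
  intro T hT δ hδ
  -- bound the group part `exp(tL) ∘ P` on `[0,T]`
  obtain ⟨K₀, hK₀⟩ : ∃ K₀ : ℝ, ∀ t ∈ Set.Icc (0:ℝ) T, ‖NormedSpace.exp (t • L)‖ ≤ K₀ := by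
    letI : NormedAlgebra ℚ (g →L[ℝ] g) := NormedAlgebra.restrictScalars ℚ ℝ (g →L[ℝ] g)
    have hc : ContinuousOn (fun t : ℝ => NormedSpace.exp (t • L)) (Set.Icc 0 T) :=
      (NormedSpace.exp_continuous.comp (continuous_id.smul continuous_const)).continuousOn
    exact isCompact_Icc.exists_bound_of_continuousOn hc
  set K : ℝ := (max K₀ 0) * ‖P‖ with hKdef
  have hK0 : 0 ≤ K := mul_nonneg (le_max_right _ _) (norm_nonneg _)
  have hKbd : ∀ t ∈ Set.Icc (0:ℝ) T, ∀ w : 𝒳,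
      ‖NormedSpace.exp (t • L) (P w)‖ ≤ K * ‖w‖ := by
    intro t ht w
    calc ‖NormedSpace.exp (t • L) (P w)‖ ≤ ‖NormedSpace.exp (t • L)‖ * ‖P w‖ :=
          ContinuousLinearMap.le_opNorm _ _
      _ ≤ (max K₀ 0) * (‖P‖ * ‖w‖) := by
          apply mul_le_mul ((hK₀ t ht).trans (le_max_left _ _)) (ContinuousLinearMap.le_opNorm _ _)
            (norm_nonneg _) (le_max_right _ _)
      _ = K * ‖w‖ := by rw [hKdef]; ring
  set D : ℝ := M₁ * C * K ^ 2 + 4 * M₂ ^ 3 * C₁ * T + 1 with hDdef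
  have hD1 : 1 ≤ D := by
    have h : (0:ℝ) ≤ M₁ * C * K ^ 2 + 4 * M₂ ^ 3 * C₁ * T := by positivity
    rw [hDdef]; linarith
  have hD0 : 0 < D := lt_of_lt_of_le one_pos hD1
  set ε : ℝ := min (min (1 / (4 * M₂)) (1 / (8 * M₂ ^ 2 * C₁ * T))) (δ / D) with hεdef
  have hεpos : 0 < ε := by
    apply lt_min (lt_min _ _) <;> positivity
  refine ⟨ε, hεpos, ?_⟩
  intro v₀ hv₀ v hvcont hNcont hmild
  have hε1 : ε ≤ 1 / (4 * M₂) := le_trans (min_le_left _ _) (min_le_left _ _)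
  have hε2 : ε ≤ 1 / (8 * M₂ ^ 2 * C₁ * T) := le_trans (min_le_left _ _) (min_le_right _ _)
  have hε3 : ε ≤ δ / D := min_le_right _ _
  set θ₀ : ℝ := min (1/2) (1 / (4 * M₂ * C₁ * T)) with hθ₀def
  have hθ₀pos : 0 < θ₀ := by apply lt_min <;> positivity
  have hv₀0 : 0 ≤ ‖v₀‖ := norm_nonneg _
  -- the a priori bound on `v`
  have key : ∀ t ∈ Set.Icc (0:ℝ) T, ‖v t‖ ≤ 2 * M₂ * ‖v₀‖ := by
    intro t ht
    apply le_of_forall_pos_le_add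
    intro θ hθpos
    set θ' : ℝ := min θ θ₀ with hθ'def
    have hθ'pos : 0 < θ' := lt_min hθpos hθ₀pos
    have hθ'θ : θ' ≤ θ := min_le_left _ _
    have hθ'₀ : θ' ≤ θ₀ := min_le_right _ _
    set B : ℝ := 2 * M₂ * ‖v₀‖ + θ' with hBdef
    have hB0 : 0 < B := by positivity
    have hB1 : B ≤ 1 := by
      have h1 : 2 * M₂ * ‖v₀‖ ≤ 2 * M₂ * ε := by
        apply mul_le_mul_of_nonneg_left hv₀ (by positivity)
      have h2 : 2 * M₂ * ε ≤ 1/2 := by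
        have := mul_le_mul_of_nonneg_left hε1 (show (0:ℝ) ≤ 2 * M₂ by positivity)
        calc 2 * M₂ * ε ≤ 2 * M₂ * (1 / (4 * M₂)) := this
          _ = 1/2 := by field_simp; ring
      have h3 : θ' ≤ 1/2 := hθ'₀.trans (min_le_left _ _)
      linarith
    -- the integral estimate under the bootstrap hypothesis
    have hest : ∀ r ∈ Set.Icc (0:ℝ) T, (∀ s ∈ Set.Icc (0:ℝ) r, ‖v s‖ ≤ B) →
        ‖v r‖ ≤ M₂ * ‖v₀‖ + M₂ * C₁ * B ^ 2 * T := by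
      intro r hr hb
      have hI : ‖∫ s in (0:ℝ)..r, S r s (N s (v s))‖ ≤ (M₂ * (C₁ * B ^ 2)) * |r - 0| := by
        apply intervalIntegral.norm_integral_le_of_norm_le_const
        intro s hs
        rw [Set.uIoc_of_le hr.1] at hs
        have hvs := hb s ⟨hs.1.le, hs.2⟩
        have hvs1 : ‖v s‖ ≤ 1 := hvs.trans hB1
        calc ‖S r s (N s (v s))‖ ≤ ‖S r s‖ * ‖N s (v s)‖ := ContinuousLinearMap.le_opNorm _ _
          _ ≤ M₂ * (C₁ * ‖v s‖ ^ 2) := by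
              apply mul_le_mul (hSBdd s r hs.1.le hs.2) (hN s _ hvs1) (norm_nonneg _) hM₂.le
          _ ≤ M₂ * (C₁ * B ^ 2) := by
              apply mul_le_mul_of_nonneg_left _ hM₂.le
              apply mul_le_mul_of_nonneg_left _ hC₁.le
              exact pow_le_pow_left₀ (norm_nonneg _) hvs 2
      rw [hmild r hr]
      have habs : |r - 0| ≤ T := by rw [sub_zero, abs_of_nonneg hr.1]; exact hr.2
      calc ‖S r 0 v₀ + ∫ s in (0:ℝ)..r, S r s (N s (v s))‖
          ≤ ‖S r 0 v₀‖ + ‖∫ s in (0:ℝ)..r, S r s (N s (v s))‖ := norm_add_le _ _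
        _ ≤ M₂ * ‖v₀‖ + M₂ * C₁ * B ^ 2 * T := by
            have h1 : ‖S r 0 v₀‖ ≤ M₂ * ‖v₀‖ := by
              calc ‖S r 0 v₀‖ ≤ ‖S r 0‖ * ‖v₀‖ := ContinuousLinearMap.le_opNorm _ _
                _ ≤ M₂ * ‖v₀‖ := mul_le_mul_of_nonneg_right (hSBdd 0 r le_rfl hr.1) hv₀0
            have h2 : (M₂ * (C₁ * B ^ 2)) * |r - 0| ≤ M₂ * C₁ * B ^ 2 * T := by
              rw [show M₂ * (C₁ * B ^ 2) = M₂ * C₁ * B ^ 2 by ring]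
              exact mul_le_mul_of_nonneg_left habs (by positivity)
            linarith
    -- the strict inequality closing the bootstrap
    have hstrict : M₂ * ‖v₀‖ + M₂ * C₁ * B ^ 2 * T < B := by
      have hMB : M₂ * C₁ * T * B ≤ 1/2 := by
        have ha1 : M₂ * C₁ * T * (2 * M₂ * ‖v₀‖) ≤ 1/4 := by
          have : ‖v₀‖ ≤ 1 / (8 * M₂ ^ 2 * C₁ * T) := hv₀.trans hε2
          have h8 : 0 < 8 * M₂ ^ 2 * C₁ * T := by positivity
          calc M₂ * C₁ * T * (2 * M₂ * ‖v₀‖) = (2 * M₂ ^ 2 * C₁ * T) * ‖v₀‖ := by ring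
            _ ≤ (2 * M₂ ^ 2 * C₁ * T) * (1 / (8 * M₂ ^ 2 * C₁ * T)) := by
                apply mul_le_mul_of_nonneg_left this (by positivity)
            _ = 1/4 := by field_simp; ring
        have ha2 : M₂ * C₁ * T * θ' ≤ 1/4 := by
          have : θ' ≤ 1 / (4 * M₂ * C₁ * T) := hθ'₀.trans (min_le_right _ _)
          calc M₂ * C₁ * T * θ' ≤ M₂ * C₁ * T * (1 / (4 * M₂ * C₁ * T)) := by
                apply mul_le_mul_of_nonneg_left this (by positivity)
            _ = 1/4 := by field_simp
        calc M₂ * C₁ * T * B = M₂ * C₁ * T * (2 * M₂ * ‖v₀‖) + M₂ * C₁ * T * θ' := by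
              rw [hBdef]; ring
          _ ≤ 1/2 := by linarith
      have : M₂ * C₁ * B ^ 2 * T ≤ (1/2) * B := by nlinarith
      have hlt : M₂ * ‖v₀‖ < (1/2) * B := by
        have : (1/2) * B = M₂ * ‖v₀‖ + θ'/2 := by rw [hBdef]; ring
        linarith
      nlinarith [this, hlt]
    -- the continuity/connectedness argument
    set A : Set ℝ := {r ∈ Set.Icc (0:ℝ) T | ∀ s ∈ Set.Icc (0:ℝ) r, ‖v s‖ ≤ B} with hAdef
    have h0A : (0:ℝ) ∈ A := by
      refine ⟨⟨le_rfl, hT.le⟩, ?_⟩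
      intro s hs
      have hs0 : s = 0 := le_antisymm hs.2 hs.1
      subst hs0
      have hv0 : v 0 = S 0 0 v₀ := by
        rw [hmild 0 ⟨le_rfl, hT.le⟩, intervalIntegral.integral_same, add_zero]
      rw [hv0]
      calc ‖S 0 0 v₀‖ ≤ ‖S 0 0‖ * ‖v₀‖ := ContinuousLinearMap.le_opNorm _ _
        _ ≤ M₂ * ‖v₀‖ := mul_le_mul_of_nonneg_right (hSBdd 0 0 le_rfl le_rfl) hv₀0
        _ ≤ B := by rw [hBdef]; nlinarith
    have hAne : A.Nonempty := ⟨0, h0A⟩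
    have hAbdd : BddAbove A := ⟨T, fun r hr => hr.1.2⟩
    set t₁ : ℝ := sSup A with ht₁def
    have ht₁0 : 0 ≤ t₁ := le_csSup hAbdd h0A
    have ht₁T : t₁ ≤ T := csSup_le hAne (fun r hr => hr.1.2)
    have hAll : ∀ s ∈ Set.Icc (0:ℝ) t₁, ‖v s‖ ≤ B := by
      intro s hs
      rcases lt_or_eq_of_le hs.2 with hlt | heq
      · obtain ⟨r, hrA, hsr⟩ := exists_lt_of_lt_csSup hAne hlt
        exact hrA.2 s ⟨hs.1, hsr.le⟩
      · rw [heq]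
        rcases eq_or_lt_of_le ht₁0 with h0 | h0
        · rw [← h0]
          exact h0A.2 0 ⟨le_rfl, le_rfl⟩
        · have hsub : Set.Ico (0:ℝ) t₁ ⊆ Set.Icc 0 T :=
            fun x hx => ⟨hx.1, hx.2.le.trans ht₁T⟩
          have hcl : t₁ ∈ closure (Set.Ico (0:ℝ) t₁) := by
            rw [closure_Ico h0.ne]; exact ⟨h0.le, le_rfl⟩
          have hne2 : (nhdsWithin t₁ (Set.Ico (0:ℝ) t₁)).NeBot :=
            mem_closure_iff_nhdsWithin_neBot.mp hcl
          have htend : Filter.Tendsto v (nhdsWithin t₁ (Set.Ico (0:ℝ) t₁)) (nhds (v t₁)) :=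
            ((hvcont t₁ ⟨ht₁0, ht₁T⟩).mono hsub).tendsto
          refine le_of_tendsto htend.norm ?_
          filter_upwards [self_mem_nhdsWithin] with x hx
          obtain ⟨r, hrA, hxr⟩ := exists_lt_of_lt_csSup hAne hx.2
          exact hrA.2 x ⟨hx.1, hxr.le⟩
    have ht₁eq : t₁ = T := by
      by_contra hne
      have ht₁lt : t₁ < T := lt_of_le_of_ne ht₁T hne
      have hvB : ‖v t₁‖ < B :=
        lt_of_le_of_lt (hest t₁ ⟨ht₁0, ht₁T⟩ hAll) hstrict
      have htend : Filter.Tendsto v (nhdsWithin t₁ (Set.Icc (0:ℝ) T)) (nhds (v t₁)) :=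
        (hvcont t₁ ⟨ht₁0, ht₁T⟩).tendsto
      have hev : ∀ᶠ x in nhdsWithin t₁ (Set.Icc (0:ℝ) T), ‖v x‖ < B :=
        Filter.Tendsto.eventually_lt_const hvB htend.norm
      rw [eventually_nhdsWithin_iff] at hev
      rw [Metric.eventually_nhds_iff] at hev
      obtain ⟨η, hηpos, hη⟩ := hev
      set t₂ : ℝ := min (t₁ + η/2) T with ht₂def
      have ht₂gt : t₁ < t₂ := by
        apply lt_min (by linarith) ht₁lt
      have ht₂T : t₂ ≤ T := min_le_right _ _
      have ht₂A : t₂ ∈ A := by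
        refine ⟨⟨ht₁0.trans ht₂gt.le, ht₂T⟩, ?_⟩
        intro s hs
        rcases le_or_gt s t₁ with hst | hst
        · exact hAll s ⟨hs.1, hst⟩
        · have hsd : dist s t₁ < η := by
            rw [Real.dist_eq, abs_of_pos (by linarith)]
            have : s ≤ t₁ + η/2 := hs.2.trans (min_le_left _ _)
            linarith
          exact (hη hsd ⟨hs.1, hs.2.trans ht₂T⟩).le
      have := le_csSup hAbdd ht₂A
      rw [← ht₁def] at this
      linarith
    have : ‖v t‖ ≤ B := hAll t ⟨ht.1, by rw [ht₁eq]; exact ht.2⟩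
    calc ‖v t‖ ≤ B := this
      _ ≤ 2 * M₂ * ‖v₀‖ + θ := by rw [hBdef]; linarith
  -- final assembly
  have h2Mε1 : 2 * M₂ * ‖v₀‖ ≤ 1 := by
    have h2 : 2 * M₂ * ε ≤ 1/2 := by
      calc 2 * M₂ * ε ≤ 2 * M₂ * (1 / (4 * M₂)) := by
            apply mul_le_mul_of_nonneg_left hε1 (by positivity)
        _ = 1/2 := by field_simp; ring
    have := mul_le_mul_of_nonneg_left hv₀ (show (0:ℝ) ≤ 2 * M₂ by positivity)
    linarith
  intro t ht
  set Z : g := NormedSpace.exp (t • L) (P v₀) with hZdef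
  have hZ : ‖Z‖ ≤ K * ‖v₀‖ := hKbd t ht v₀
  set I : 𝒳 := ∫ s in (0:ℝ)..t, S t s (N s (v s)) with hIdef
  have hid : (Φ t ustar + v t) - Φ t (Ψ Z ustar) =
      S₀ t (Ps v₀) + I - Φ t (Ψ Z ustar - ustar - p Z) := by
    have h1 : v t = S t 0 v₀ + I := hmild t ht
    have h3 : S₀ t v₀ = Φ t (p Z) + S₀ t (Ps v₀) := hS₀decomp t ht.1 v₀
    rw [h1, hS0 t, h3, map_sub, map_sub]
    abel
  rw [hid]
  have hA1 : ‖S₀ t (Ps v₀)‖ ≤ M₃ * Real.exp (-a * t) * ‖v₀‖ := by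
    calc ‖S₀ t (Ps v₀)‖ = ‖((S₀ t).comp Ps) v₀‖ := rfl
      _ ≤ ‖(S₀ t).comp Ps‖ * ‖v₀‖ := ContinuousLinearMap.le_opNorm _ _
      _ ≤ M₃ * Real.exp (-a * t) * ‖v₀‖ :=
          mul_le_mul_of_nonneg_right (hStable t ht.1) hv₀0
  have hA2 : ‖I‖ ≤ 4 * M₂ ^ 3 * C₁ * T * ‖v₀‖ ^ 2 := by
    have hI : ‖I‖ ≤ (M₂ * (C₁ * (2 * M₂ * ‖v₀‖) ^ 2)) * |t - 0| := by
      rw [hIdef]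
      apply intervalIntegral.norm_integral_le_of_norm_le_const
      intro s hs
      rw [Set.uIoc_of_le ht.1] at hs
      have hsIcc : s ∈ Set.Icc (0:ℝ) T := ⟨hs.1.le, hs.2.trans ht.2⟩
      have hvs := key s hsIcc
      have hvs1 : ‖v s‖ ≤ 1 := hvs.trans h2Mε1
      calc ‖S t s (N s (v s))‖ ≤ ‖S t s‖ * ‖N s (v s)‖ := ContinuousLinearMap.le_opNorm _ _
        _ ≤ M₂ * (C₁ * ‖v s‖ ^ 2) := by
            apply mul_le_mul (hSBdd s t hs.1.le hs.2) (hN s _ hvs1) (norm_nonneg _) hM₂.le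
        _ ≤ M₂ * (C₁ * (2 * M₂ * ‖v₀‖) ^ 2) := by
            apply mul_le_mul_of_nonneg_left _ hM₂.le
            apply mul_le_mul_of_nonneg_left _ hC₁.le
            exact pow_le_pow_left₀ (norm_nonneg _) hvs 2
    have habs : |t - 0| ≤ T := by rw [sub_zero, abs_of_nonneg ht.1]; exact ht.2
    calc ‖I‖ ≤ (M₂ * (C₁ * (2 * M₂ * ‖v₀‖) ^ 2)) * |t - 0| := hI
      _ = (4 * M₂ ^ 3 * C₁ * ‖v₀‖ ^ 2) * |t - 0| := by ring
      _ ≤ (4 * M₂ ^ 3 * C₁ * ‖v₀‖ ^ 2) * T := mul_le_mul_of_nonneg_left habs (by positivity)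
      _ = 4 * M₂ ^ 3 * C₁ * T * ‖v₀‖ ^ 2 := by ring
  have hA3 : ‖Φ t (Ψ Z ustar - ustar - p Z)‖ ≤ M₁ * C * K ^ 2 * ‖v₀‖ ^ 2 := by
    calc ‖Φ t (Ψ Z ustar - ustar - p Z)‖ ≤ ‖Φ t‖ * ‖Ψ Z ustar - ustar - p Z‖ :=
          ContinuousLinearMap.le_opNorm _ _
      _ ≤ M₁ * (C * ‖Z‖ ^ 2) := by
          apply mul_le_mul (hΦBdd t ht.1) (hΨTaylor Z) (norm_nonneg _) hM₁.le
      _ ≤ M₁ * (C * (K * ‖v₀‖) ^ 2) := by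
          apply mul_le_mul_of_nonneg_left _ hM₁.le
          apply mul_le_mul_of_nonneg_left _ hC.le
          exact pow_le_pow_left₀ (norm_nonneg _) hZ 2
      _ = M₁ * C * K ^ 2 * ‖v₀‖ ^ 2 := by ring
  have hquad : (M₁ * C * K ^ 2 + 4 * M₂ ^ 3 * C₁ * T) * ‖v₀‖ ^ 2 ≤ δ * ‖v₀‖ := by
    have hcoef : 0 ≤ M₁ * C * K ^ 2 + 4 * M₂ ^ 3 * C₁ * T := by positivity
    have hεδ : (M₁ * C * K ^ 2 + 4 * M₂ ^ 3 * C₁ * T) * ε ≤ δ := by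
      have h1 : (M₁ * C * K ^ 2 + 4 * M₂ ^ 3 * C₁ * T) * ε ≤
          (M₁ * C * K ^ 2 + 4 * M₂ ^ 3 * C₁ * T) * (δ / D) :=
        mul_le_mul_of_nonneg_left hε3 hcoef
      have h2 : (M₁ * C * K ^ 2 + 4 * M₂ ^ 3 * C₁ * T) * (δ / D) ≤ δ := by
        rw [hDdef]
        rw [div_eq_inv_mul]
        have hDpos : (0:ℝ) < M₁ * C * K ^ 2 + 4 * M₂ ^ 3 * C₁ * T + 1 := by
          rw [hDdef] at hD0; exact hD0
        rw [mul_comm ((M₁ * C * K ^ 2 + 4 * M₂ ^ 3 * C₁ * T + 1)⁻¹) δ, ← mul_assoc]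
        calc (M₁ * C * K ^ 2 + 4 * M₂ ^ 3 * C₁ * T) * δ *
              (M₁ * C * K ^ 2 + 4 * M₂ ^ 3 * C₁ * T + 1)⁻¹
            ≤ (M₁ * C * K ^ 2 + 4 * M₂ ^ 3 * C₁ * T + 1) * δ *
              (M₁ * C * K ^ 2 + 4 * M₂ ^ 3 * C₁ * T + 1)⁻¹ := by
              apply mul_le_mul_of_nonneg_right (by nlinarith) (by positivity)
          _ = δ := by field_simp
      linarith
    calc (M₁ * C * K ^ 2 + 4 * M₂ ^ 3 * C₁ * T) * ‖v₀‖ ^ 2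
        = ((M₁ * C * K ^ 2 + 4 * M₂ ^ 3 * C₁ * T) * ‖v₀‖) * ‖v₀‖ := by ring
      _ ≤ ((M₁ * C * K ^ 2 + 4 * M₂ ^ 3 * C₁ * T) * ε) * ‖v₀‖ := by
          apply mul_le_mul_of_nonneg_right (mul_le_mul_of_nonneg_left hv₀ hcoef) hv₀0
      _ ≤ δ * ‖v₀‖ := mul_le_mul_of_nonneg_right hεδ hv₀0
  calc ‖S₀ t (Ps v₀) + I - Φ t (Ψ Z ustar - ustar - p Z)‖
      ≤ ‖S₀ t (Ps v₀) + I‖ + ‖Φ t (Ψ Z ustar - ustar - p Z)‖ := norm_sub_le _ _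
    _ ≤ ‖S₀ t (Ps v₀)‖ + ‖I‖ + ‖Φ t (Ψ Z ustar - ustar - p Z)‖ := by
        have := norm_add_le (S₀ t (Ps v₀)) I
        linarith
    _ ≤ M₃ * Real.exp (-a * t) * ‖v₀‖ +
        (M₁ * C * K ^ 2 + 4 * M₂ ^ 3 * C₁ * T) * ‖v₀‖ ^ 2 := by
        have : ‖I‖ + ‖Φ t (Ψ Z ustar - ustar - p Z)‖ ≤
            (M₁ * C * K ^ 2 + 4 * M₂ ^ 3 * C₁ * T) * ‖v₀‖ ^ 2 := by
          have := hA2; have := hA3; nlinarith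
        linarith
    _ ≤ M₃ * Real.exp (-a * t) * ‖v₀‖ + δ * ‖v₀‖ := by linarith
    _ = (M₃ * Real.exp (-a * t) + δ) * ‖v₀‖ := by ring
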